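/- Homotopic morphisms of N-complexes induce equal maps on every amplitude homology: if f, g : (M, ∂) → (M', ∂') are morphisms of N-complexes and there exist module maps K_m : M → M' with Σ_{m=0}^{N-1} (∂')^m K_m ∂^{N-m-1} = f - g, then f and g induce the same map H_k(M) → H_k(M') for each amplitude 1 ≤ k ≤ N-1. -/
import Mathlib


/-- Homotopic morphisms of `N`-complexes induce equal maps on every amplitude homology:
if `∑_{m=0}^{N-1} (∂')^m K_m ∂^{N-m-1} = f - g`, then for each amplitude `1 ≤ k ≤ N-1`
and each `m`-amplitude cycle `x` (i.e. `∂^k x = 0`), the difference `f x - g x` is an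
`(N-k)`-amplitude boundary, so `f` and `g` induce the same map
`ker(∂^k)/im(∂^{N-k}) → ker(∂'^k)/im(∂'^{N-k})`. -/
theorem homotopic_induce_equal_on_amplitude_homology
    (R : Type*) [CommRing R] (M M' : Type*)
    [AddCommGroup M] [Module R M] [AddCommGroup M'] [Module R M']
    (N : ℕ) (hN : 2 ≤ N)
    (D : M →ₗ[R] M) (D' : M' →ₗ[R] M') (hD : D ^ N = 0) (hD' : D' ^ N = 0)
    (f g : M →ₗ[R] M') (hf : f.comp D = D'.comp f) (hg : g.comp D = D'.comp g)
    (K : ℕ → (M →ₗ[R] M'))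
    (hK : ∑ m ∈ Finset.range N, (D' ^ m).comp ((K m).comp (D ^ (N - m - 1))) = f - g)
    (k : ℕ) (hk1 : 1 ≤ k) (hk2 : k ≤ N - 1) :
    ∀ x ∈ LinearMap.ker (D ^ k), f x - g x ∈ LinearMap.range (D' ^ (N - k)) := by
  intro x hx
  have h := LinearMap.congr_fun hK x
  rw [LinearMap.sub_apply, LinearMap.sum_apply] at h
  rw [← h]
  apply Submodule.sum_mem
  intro m hm
  simp only [Finset.mem_range] at hm
  by_cases hc : m < N - k
  · have h1 : N - m - 1 = (N - m - 1 - k) + k := by omega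
    have hz : (D ^ (N - m - 1)) x = 0 := by
      rw [h1, pow_add, Module.End.mul_apply, LinearMap.mem_ker.mp hx, map_zero]
    simp [LinearMap.comp_apply, hz]
  · refine ⟨(D' ^ (m - (N - k))) ((K m) ((D ^ (N - m - 1)) x)), ?_⟩
    have h1 : m = (N - k) + (m - (N - k)) := by omega
    simp only [LinearMap.comp_apply]
    rw [show (D' ^ m : M' →ₗ[R] M') = D' ^ (N - k) * D' ^ (m - (N - k)) from by
      rw [← pow_add, ← h1], Module.End.mul_apply]
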